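/- In Case 2 of Theorem 1 (M₁ < N₁ ≤ N₂ < M₂), min⁺{A,B,C} = min(N₂ − M₁, N₁ − M₁ + β₁₂·min(M₂−N₁, N₂−M₁)). -/

import Mathlib

noncomputable def minp (x y : ℝ) : ℝ := max (min x y) 0

noncomputable def Aval (M1 M2 N1 N2 : ℝ) : ℝ :=
  min (min (max M1 N2) (max M2 N1)) (min (M1 + M2) (N1 + N2)) - min M1 N1

noncomputable def Bval (M1 M2 N1 N2 β12 β21 : ℝ) : ℝ :=
  minp (N1 - M1) M2 + min M1 N2 - min M1 N1 + β12 * minp (N2 - M1) M2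
    + β21 * minp (M1 - N2) N1

noncomputable def Cval (M1 M2 N1 N2 β12 : ℝ) : ℝ :=
  minp (N1 - M1) M2 + β12 * minp (M2 - N1) N2

noncomputable def dof (M1 M2 N1 N2 β12 β21 : ℝ) : ℝ :=
  max (min (Aval M1 M2 N1 N2) (min (Bval M1 M2 N1 N2 β12 β21) (Cval M1 M2 N1 N2 β12))) 0

theorem case2_formula (M1 M2 N1 N2 : ℕ)
    (hM1 : 0 < M1) (hM2 : 0 < M2) (hN1 : 0 < N1) (hN2 : 0 < N2)
    (h1 : M1 < N1) (h2 : N1 ≤ N2) (h3 : N2 < M2)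
    (β12 β21 : ℝ) (hβ12 : β12 ∈ Set.Icc (0 : ℝ) 1) (hβ21 : β21 ∈ Set.Icc (0 : ℝ) 1) :
    dof (M1 : ℝ) (M2 : ℝ) (N1 : ℝ) (N2 : ℝ) β12 β21
      = min ((N2 : ℝ) - M1)
          ((N1 : ℝ) - M1 + β12 * min ((M2 : ℝ) - N1) ((N2 : ℝ) - M1)) := by
  obtain ⟨hb0, hb1⟩ := hβ12
  have h1' : (M1:ℝ) < N1 := by exact_mod_cast h1
  have h2' : (N1:ℝ) ≤ N2 := by exact_mod_cast h2
  have h3' : (N2:ℝ) < M2 := by exact_mod_cast h3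
  have hM1' : (0:ℝ) < M1 := by exact_mod_cast hM1
  have hN1' : (0:ℝ) < N1 := by exact_mod_cast hN1
  unfold dof Aval Bval Cval minp
  rw [min_eq_left h1'.le, max_eq_right (by linarith : (M1:ℝ) ≤ N2),
      max_eq_left (by linarith : (N1:ℝ) ≤ M2),
      min_eq_left (by linarith : (N2:ℝ) ≤ M2),
      min_eq_left (le_min (by linarith) (by linarith) :
        (N2:ℝ) ≤ min ((M1:ℝ) + M2) (N1 + N2)),
      min_eq_left (by linarith : (M1:ℝ) ≤ N2)]
  rw [show max (min ((N1:ℝ) - M1) M2) 0 = (N1:ℝ) - M1 by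
        rw [min_eq_left (by linarith), max_eq_left (by linarith)],
      show max (min ((N2:ℝ) - M1) M2) 0 = (N2:ℝ) - M1 by
        rw [min_eq_left (by linarith), max_eq_left (by linarith)],
      show max (min ((M1:ℝ) - N2) N1) 0 = 0 from
        max_eq_right ((min_le_left _ _).trans (by linarith)),
      show max (min ((M2:ℝ) - N1) N2) 0 = min ((M2:ℝ) - N1) N2 from
        max_eq_left (le_min (by linarith) (by linarith))]
  have hmul : ∀ x y : ℝ, x ≤ y → β12 * x ≤ β12 * y :=
    fun x y h => mul_le_mul_of_nonneg_left h hb0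
  have hjunk : ((N1:ℝ) - M1 + M1 - M1 + β12 * ((N2:ℝ) - M1) + β21 * 0)
      = (N1:ℝ) - M1 + β12 * ((N2:ℝ) - M1) := by ring
  rcases le_total ((M2:ℝ) - N1) ((N2:ℝ) - M1) with h | h
  · rw [min_eq_left h, min_eq_left (by linarith : (M2:ℝ) - N1 ≤ N2), hjunk]
    have hb : β12 * ((M2:ℝ) - N1) ≤ β12 * ((N2:ℝ) - M1) := hmul _ _ h
    have hnn : (0:ℝ) ≤ β12 * ((M2:ℝ) - N1) := mul_nonneg hb0 (by linarith)
    rw [min_eq_right (add_le_add_right hb _),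
        max_eq_left (le_min (by linarith) (by linarith))]
  · rw [min_eq_right h, hjunk]
    have hle : (N2:ℝ) - M1 ≤ min ((M2:ℝ) - N1) N2 := le_min (by linarith) (by linarith)
    have hb : β12 * ((N2:ℝ) - M1) ≤ β12 * min ((M2:ℝ) - N1) N2 := hmul _ _ hle
    have hnn : (0:ℝ) ≤ β12 * ((N2:ℝ) - M1) := mul_nonneg hb0 (by linarith)
    rw [min_eq_left (add_le_add_right hb _),
        max_eq_left (le_min (by linarith) (by linarith))]
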